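/- For even n, the number of sequences of length n over A_4 = {-3,-1,+1,+3} that are simultaneously charge-balanced (entries sum to 0) and polarity-balanced (equally many positive and negative entries) equals C(n, n/2)^2. -/

import Mathlib

open Finset

private lemma sum_if_int {n : ℕ} (p : Fin n → Prop) [DecidablePred p] (a b : ℤ) :
    ∑ i, (if p i then a else b)
      = a * ((univ.filter p).card : ℤ) + b * ((n : ℤ) - ((univ.filter p).card : ℤ)) := by
  rw [Finset.sum_ite, Finset.sum_const, Finset.sum_const, nsmul_eq_mul, nsmul_eq_mul]
  have h := Finset.card_filter_add_card_filter_not (s := (univ : Finset (Fin n))) (p := p)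
  have hu : (univ : Finset (Fin n)).card = n := by simp
  have : ((univ.filter fun i => ¬ p i).card : ℤ) = (n : ℤ) - ((univ.filter p).card : ℤ) := by
    rw [hu] at h; push_cast [← h]; ring
  rw [this]; ring

private lemma val_decomp (a : ℤ) (h : a = -3 ∨ a = -1 ∨ a = 1 ∨ a = 3) :
    a = (if 0 < a then (2:ℤ) else -2) + (if a = 3 ∨ a = -1 then (1:ℤ) else -1) := by
  rcases h with h|h|h|h <;> subst h <;> norm_num

theorem card_cpb_quaternary (n s : ℕ) (hn : n = 2 * s) :
    ((Fintype.piFinset fun _ : Fin n => ({-3, -1, 1, 3} : Finset ℤ)).filter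
        (fun x => (∑ i, x i = 0) ∧
          (Finset.univ.filter fun i => 0 < x i).card =
            (Finset.univ.filter fun i => x i < 0).card)).card =
      (n.choose s) ^ 2 := by
  classical
  have key : ((Fintype.piFinset fun _ : Fin n => ({-3, -1, 1, 3} : Finset ℤ)).filter
        (fun x => (∑ i, x i = 0) ∧
          (Finset.univ.filter fun i => 0 < x i).card =
            (Finset.univ.filter fun i => x i < 0).card)).card =
      ((univ.powersetCard s) ×ˢ (univ.powersetCard s) :
        Finset (Finset (Fin n) × Finset (Fin n))).card := by
    apply Finset.card_nbij'
      (i := fun x => (univ.filter (fun i => 0 < x i), univ.filter (fun i => x i = 3 ∨ x i = -1)))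
      (j := fun p i => (if i ∈ p.1 then (2:ℤ) else -2) + (if i ∈ p.2 then (1:ℤ) else -1))
    · -- forward membership
      intro x hx
      simp only [Finset.mem_coe, Finset.mem_filter, Fintype.mem_piFinset] at hx
      obtain ⟨hmem, hsum, hpol⟩ := hx
      have hvals : ∀ i, x i = -3 ∨ x i = -1 ∨ x i = 1 ∨ x i = 3 := by
        intro i; have := hmem i; simp at this; tauto
      -- card of P
      have hPN : (univ.filter fun i => 0 < x i).card +
          (univ.filter fun i => x i < 0).card = n := by
        have h1 : (univ.filter fun i => x i < 0) = (univ.filter fun i => ¬ 0 < x i) := by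
          apply Finset.filter_congr
          intro i _
          rcases hvals i with h|h|h|h <;> rw [h] <;> norm_num
        rw [h1]
        have := Finset.card_filter_add_card_filter_not
          (s := (univ : Finset (Fin n))) (p := fun i => 0 < x i)
        simpa using this
      have hP : (univ.filter fun i => 0 < x i).card = s := by omega
      -- card of Q
      have hQ : (univ.filter fun i => x i = 3 ∨ x i = -1).card = s := by
        have hrw : ∑ i, x i = ∑ i, ((if 0 < x i then (2:ℤ) else -2)
            + (if x i = 3 ∨ x i = -1 then (1:ℤ) else -1)) := by
          apply Finset.sum_congr rfl
          intro i _
          exact val_decomp (x i) (hvals i)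
        rw [hrw, Finset.sum_add_distrib, sum_if_int, sum_if_int, hP] at hsum
        have hQle : (univ.filter fun i => x i = 3 ∨ x i = -1).card ≤ n := by
          simpa using Finset.card_filter_le univ (fun i => x i = 3 ∨ x i = -1)
        -- hsum : 2 * s + (-2) * (n - s) + (1 * Q + (-1)*(n - Q)) = 0
        have : ((univ.filter fun i => x i = 3 ∨ x i = -1).card : ℤ) = s := by
          omega
        exact_mod_cast this
      simp [Finset.mem_product, Finset.mem_powersetCard, hP, hQ]
    · -- backward membership
      intro p hp
      simp only [Finset.mem_coe, Finset.mem_product, Finset.mem_powersetCard] at hp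
      obtain ⟨⟨-, hP⟩, -, hQ⟩ := hp
      simp only [Finset.mem_coe, Finset.mem_filter, Fintype.mem_piFinset]
      refine ⟨?_, ?_, ?_⟩
      · intro i
        by_cases h1 : i ∈ p.1 <;> by_cases h2 : i ∈ p.2 <;> simp [h1, h2]
      · rw [Finset.sum_add_distrib, sum_if_int (fun i => i ∈ p.1),
          sum_if_int (fun i => i ∈ p.2)]
        have e1 : (univ.filter fun i => i ∈ p.1) = p.1 := by
          simp [Finset.filter_mem_eq_inter]
        have e2 : (univ.filter fun i => i ∈ p.2) = p.2 := by
          simp [Finset.filter_mem_eq_inter]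
        rw [e1, e2, hP, hQ, hn]
        push_cast; ring
      · have e1 : (univ.filter fun i =>
            (0:ℤ) < (if i ∈ p.1 then (2:ℤ) else -2) + (if i ∈ p.2 then (1:ℤ) else -1)) = p.1 := by
          ext i
          by_cases h1 : i ∈ p.1 <;> by_cases h2 : i ∈ p.2 <;> simp [h1, h2]
        have e2 : (univ.filter fun i =>
            (if i ∈ p.1 then (2:ℤ) else -2) + (if i ∈ p.2 then (1:ℤ) else -1) < 0) = p.1ᶜ := by
          ext i
          by_cases h1 : i ∈ p.1 <;> by_cases h2 : i ∈ p.2 <;> simp [h1, h2]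
        rw [e1, e2, hP, Finset.card_compl, hP]
        simp [hn]; omega
    · -- left inverse
      intro x hx
      simp only [Finset.mem_coe, Finset.mem_filter, Fintype.mem_piFinset] at hx
      obtain ⟨hmem, -, -⟩ := hx
      have hvals : ∀ i, x i = -3 ∨ x i = -1 ∨ x i = 1 ∨ x i = 3 := by
        intro i; have := hmem i; simp at this; tauto
      funext i
      have := hvals i
      rcases this with h|h|h|h <;> simp [h]
    · -- right inverse
      intro p hp
      ext i
      · simp only [Finset.mem_filter, Finset.mem_univ, true_and]
        by_cases h1 : i ∈ p.1 <;> by_cases h2 : i ∈ p.2 <;> simp [h1, h2]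
      · simp only [Finset.mem_filter, Finset.mem_univ, true_and]
        by_cases h1 : i ∈ p.1 <;> by_cases h2 : i ∈ p.2 <;> simp [h1, h2]
  rw [key, Finset.card_product, Finset.card_powersetCard]
  simp [sq]
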